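/- Each Baxter equivalence class of permutations of size n is an interval of the right weak (permutohedron) order on S_n. -/

import Mathlib

open scoped Classical

/-- Baxter adjacency relations on words over the alphabet of natural numbers. -/
def BaxterAdj (w w' : List ℕ) : Prop :=
  (∃ (a b c d : ℕ) (u v : List ℕ), a ≤ b ∧ b < c ∧ c ≤ d ∧
      w = c :: (u ++ a :: d :: (v ++ [b])) ∧ w' = c :: (u ++ d :: a :: (v ++ [b]))) ∨
  (∃ (a b c d : ℕ) (u v : List ℕ), a < b ∧ b ≤ c ∧ c < d ∧
      w = b :: (u ++ d :: a :: (v ++ [c])) ∧ w' = b :: (u ++ a :: d :: (v ++ [c])))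

/-- One rewriting step: an adjacency applied inside a word (congruence context). -/
def BaxterStep (w w' : List ℕ) : Prop :=
  ∃ (p s u v : List ℕ), BaxterAdj u v ∧ w = p ++ u ++ s ∧ w' = p ++ v ++ s

/-- The Baxter congruence: the equivalence generated by the Baxter steps. -/
def BaxterEquiv : List ℕ → List ℕ → Prop := Relation.EqvGen BaxterStep

/-- Sylvester adjacency: a c u b ≡ c a u b when a ≤ b < c. -/
def SylvAdj (w w' : List ℕ) : Prop :=
  ∃ (a b c : ℕ) (u : List ℕ), a ≤ b ∧ b < c ∧
    w = a :: c :: (u ++ [b]) ∧ w' = c :: a :: (u ++ [b])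

def SylvStep (w w' : List ℕ) : Prop :=
  ∃ (p s u v : List ℕ), SylvAdj u v ∧ w = p ++ u ++ s ∧ w' = p ++ v ++ s

def SylvEquiv : List ℕ → List ℕ → Prop := Relation.EqvGen SylvStep

/-- #-sylvester adjacency: b u a c ≡ b u c a when a < b ≤ c. -/
def SylvHAdj (w w' : List ℕ) : Prop :=
  ∃ (a b c : ℕ) (u : List ℕ), a < b ∧ b ≤ c ∧
    w = b :: (u ++ [a, c]) ∧ w' = b :: (u ++ [c, a])

def SylvHStep (w w' : List ℕ) : Prop :=
  ∃ (p s u v : List ℕ), SylvHAdj u v ∧ w = p ++ u ++ s ∧ w' = p ++ v ++ s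

def SylvHEquiv : List ℕ → List ℕ → Prop := Relation.EqvGen SylvHStep

/-- The standardized word of `u`: position `i` receives the rank of the letter `u i`
(ties broken from left to right), ranks starting at `1`. -/
def std (u : List ℕ) : List ℕ :=
  (List.range u.length).map fun i =>
    ((List.range u.length).filter fun j =>
      decide (u.getD j 0 < u.getD i 0 ∨ (u.getD j 0 = u.getD i 0 ∧ j < i))).length + 1

/-- The maximal letter of a word. -/
def wordMax (u : List ℕ) : ℕ := u.foldr max 0

/-- The Schützenberger transformation: reverse and complement each letter w.r.t. max + 1. -/
def schutz (u : List ℕ) : List ℕ := u.reverse.map fun x => wordMax u + 1 - x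

/-- Labeled binary trees. -/
inductive BT where
  | leaf : BT
  | node : BT → ℕ → BT → BT
deriving DecidableEq

/-- Leaf insertion into a left binary search tree. -/
def leafInsL : BT → ℕ → BT
  | .leaf, a => .node .leaf a .leaf
  | .node l b r, a => if a < b then .node (leafInsL l a) b r else .node l b (leafInsL r a)

/-- Leaf insertion into a right binary search tree. -/
def leafInsR : BT → ℕ → BT
  | .leaf, a => .node .leaf a .leaf
  | .node l b r, a => if a ≤ b then .node (leafInsR l a) b r else .node l b (leafInsR r a)

/-- The lower restricted tree `T_{≤ a}` of a right binary search tree. -/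
def splitLE : BT → ℕ → BT
  | .leaf, _ => .leaf
  | .node l b r, a => if b ≤ a then .node l b (splitLE r a) else splitLE l a

/-- The higher restricted tree `T_{> a}` of a right binary search tree. -/
def splitGT : BT → ℕ → BT
  | .leaf, _ => .leaf
  | .node l b r, a => if b ≤ a then splitGT r a else .node (splitGT l a) b r

/-- Root insertion into a right binary search tree. -/
def rootIns (t : BT) (a : ℕ) : BT := .node (splitLE t a) a (splitGT t a)

/-- The left tree of the P-symbol: leaf insertions from left to right. -/
def insL (u : List ℕ) : BT := u.foldl leafInsL .leaf

/-- The right tree of the P-symbol: root insertions from left to right. -/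
def insR (u : List ℕ) : BT := u.foldl rootIns .leaf

/-- The P-symbol of a word. -/
def Psymb (u : List ℕ) : BT × BT := (insL u, insR u)

/-- Unlabeled binary trees. -/
inductive UBT where
  | leaf : UBT
  | node : UBT → UBT → UBT
deriving DecidableEq

/-- The shape of a labeled binary tree. -/
def shape : BT → UBT
  | .leaf => .leaf
  | .node l _ r => .node (shape l) (shape r)

/-- The shape of the P-symbol of a word. -/
def Pshape (u : List ℕ) : UBT × UBT := (shape (insL u), shape (insR u))

/-- Number of internal nodes. -/
def sizeU : UBT → ℕ
  | .leaf => 0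
  | .node l r => sizeU l + sizeU r + 1

/-- Orientations of the leaves, from left to right: `true` means right-oriented
(the leaf is the right child of its parent); the parameter is the orientation
assigned if the tree is reduced to a leaf. -/
def loU : UBT → Bool → List Bool
  | .leaf, b => [b]
  | .node l r, _ => loU l false ++ loU r true

/-- Leaf orientations of a labeled binary tree. -/
def loB : BT → Bool → List Bool
  | .leaf, b => [b]
  | .node l _ r, _ => loB l false ++ loB r true

/-- The canopy: orientations of the leaves except the first and the last one. -/
def canU (t : UBT) : List Bool := ((loU t false).drop 1).dropLast

/-- A pair of twin binary trees: same number of nodes and complementary canopies. -/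
def IsTwin (J : UBT × UBT) : Prop :=
  sizeU J.1 = sizeU J.2 ∧ (canU J.1).length = (canU J.2).length ∧
    ∀ i < (canU J.1).length, (canU J.1).getD i false ≠ (canU J.2).getD i false

/-- `σ` is (the word of) a permutation of `{1, …, n}`. -/
def IsPerm (n : ℕ) (σ : List ℕ) : Prop := σ.Perm (List.range' 1 n)

/-- Covering-type step of the right permutohedron (weak) order: exchange of two
adjacent letters `a < b`. -/
def PermutoStep (σ ν : List ℕ) : Prop :=
  ∃ (p s : List ℕ) (a b : ℕ), a < b ∧ σ = p ++ a :: b :: s ∧ ν = p ++ b :: a :: s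

/-- The right permutohedron (weak) order. -/
def PermutoLe : List ℕ → List ℕ → Prop := Relation.ReflTransGen PermutoStep

/-- Baxter permutations: avoiding the generalized patterns 2-41-3 and 3-14-2. -/
def IsBaxterPerm (σ : List ℕ) : Prop :=
  ∀ i j k, i < j → j + 1 < k → k < σ.length →
    ¬(σ.getD (j+1) 0 < σ.getD i 0 ∧ σ.getD i 0 < σ.getD k 0 ∧ σ.getD k 0 < σ.getD j 0) ∧
    ¬(σ.getD j 0 < σ.getD k 0 ∧ σ.getD k 0 < σ.getD i 0 ∧ σ.getD i 0 < σ.getD (j+1) 0)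

namespace BxP

/-- `Inv w a b`: `a < b` and `b` occurs before `a` in `w`. -/
def Inv (w : List ℕ) (a b : ℕ) : Prop :=
  a < b ∧ a ∈ w ∧ b ∈ w ∧ w.idxOf b < w.idxOf a

/-- A down Baxter move. -/
def Down (w w' : List ℕ) : Prop :=
  ∃ (al bl : List ℕ) (x y p q : ℕ), x < y ∧ p ∈ al ∧ q ∈ bl ∧
    x < p ∧ p < y ∧ x < q ∧ q < y ∧
    w = al ++ y :: x :: bl ∧ w' = al ++ x :: y :: bl

section IdxFacts

variable {w : List ℕ} {al bl : List ℕ} {u v a b : ℕ}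

lemma nodup_decomp (hw : w.Nodup) (h : w = al ++ u :: v :: bl) :
    al.Nodup ∧ bl.Nodup ∧ u ≠ v ∧ u ∉ al ∧ v ∉ al ∧ u ∉ bl ∧ v ∉ bl := by
  subst h
  rw [List.nodup_append] at hw
  obtain ⟨h1, h2, h3⟩ := hw
  simp only [List.nodup_cons, List.mem_cons] at h2
  refine ⟨h1, h2.2.2, ?_, ?_, ?_, ?_, h2.2.1⟩
  · intro e; exact h2.1 (by simp [e])
  · intro hu; exact h3 u hu u (by simp) rfl
  · intro hv; exact h3 v hv v (by simp) rfl
  · intro hu; exact h2.1 (by simp [hu])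

lemma idx_u (hw : w.Nodup) (h : w = al ++ u :: v :: bl) : w.idxOf u = al.length := by
  obtain ⟨-, -, -, hu, -, -, -⟩ := nodup_decomp hw h
  subst h
  rw [List.idxOf_append_of_notMem hu, List.idxOf_cons_self]; omega

lemma idx_v (hw : w.Nodup) (h : w = al ++ u :: v :: bl) : w.idxOf v = al.length + 1 := by
  obtain ⟨-, -, huv, -, hv, -, -⟩ := nodup_decomp hw h
  subst h
  rw [List.idxOf_append_of_notMem hv, List.idxOf_cons_ne _ huv, List.idxOf_cons_self]

lemma idx_mem_prefix (h : w = al ++ u :: v :: bl) (ha : a ∈ al) :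
    w.idxOf a = al.idxOf a ∧ w.idxOf a < al.length := by
  subst h
  rw [List.idxOf_append_of_mem ha]
  exact ⟨rfl, List.idxOf_lt_length_iff.2 ha⟩

lemma idx_mem_suffix (hw : w.Nodup) (h : w = al ++ u :: v :: bl) (ha : a ∈ bl) :
    w.idxOf a = al.length + 2 + bl.idxOf a := by
  obtain ⟨-, -, -, -, -, hu, hv⟩ := nodup_decomp hw h
  have hau : a ≠ u := fun e => hu (e ▸ ha)
  have hav : a ≠ v := fun e => hv (e ▸ ha)
  have hal : a ∉ al := by
    subst h; rw [List.nodup_append] at hw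
    exact fun hmem => hw.2.2 a hmem a (by simp [ha]) rfl
  subst h
  rw [List.idxOf_append_of_notMem hal, List.idxOf_cons_ne _ (Ne.symm hau),
    List.idxOf_cons_ne _ (Ne.symm hav)]
  omega

lemma mem_cases (h : w = al ++ u :: v :: bl) (ha : a ∈ w) :
    a ∈ al ∨ a = u ∨ a = v ∨ a ∈ bl := by
  subst h; simp only [List.mem_append, List.mem_cons] at ha; tauto

/-- Swap lemma: index of an element other than u,v is unchanged by swapping u,v. -/
lemma idx_swap (hw : w.Nodup) {w' : List ℕ} (hw' : w'.Nodup)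
    (h : w = al ++ u :: v :: bl) (h' : w' = al ++ v :: u :: bl)
    (ha : a ∈ w) (hau : a ≠ u) (hav : a ≠ v) : w'.idxOf a = w.idxOf a := by
  rcases mem_cases h ha with hc | hc | hc | hc
  · rw [(idx_mem_prefix h hc).1, (idx_mem_prefix h' hc).1]
  · exact absurd hc hau
  · exact absurd hc hav
  · rw [idx_mem_suffix hw h hc, idx_mem_suffix hw' h' hc]

lemma mem_swap (h : w = al ++ u :: v :: bl) (h' : w' = al ++ v :: u :: bl) :
    a ∈ w ↔ a ∈ w' := by subst h h'; simp only [List.mem_append, List.mem_cons]; tauto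

lemma mem_prefix_iff (hw : w.Nodup) (h : w = al ++ u :: v :: bl) (ha : a ∈ w) :
    a ∈ al ↔ w.idxOf a < al.length := by
  constructor
  · exact fun hc => (idx_mem_prefix h hc).2
  · intro hlt
    rcases mem_cases h ha with hc | hc | hc | hc
    · exact hc
    · rw [hc, idx_u hw h] at hlt; omega
    · rw [hc, idx_v hw h] at hlt; omega
    · rw [idx_mem_suffix hw h hc] at hlt; omega

lemma mem_suffix_iff (hw : w.Nodup) (h : w = al ++ u :: v :: bl) (ha : a ∈ w) :
    a ∈ bl ↔ al.length + 1 < w.idxOf a := by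
  constructor
  · intro hc; rw [idx_mem_suffix hw h hc]; omega
  · intro hlt
    rcases mem_cases h ha with hc | hc | hc | hc
    · have := (idx_mem_prefix h hc).2; omega
    · rw [hc, idx_u hw h] at hlt; omega
    · rw [hc, idx_v hw h] at hlt; omega
    · exact hc

end IdxFacts


section DownFacts

open scoped Classical

variable {w w' : List ℕ}

lemma down_perm (hd : Down w w') : w.Perm w' := by
  obtain ⟨al, bl, x, y, p, q, -, -, -, -, -, -, -, hw, hw'⟩ := hd
  subst hw hw'
  exact (List.Perm.append_left al (List.Perm.swap x y bl))

lemma down_nodup (hd : Down w w') (hw : w.Nodup) : w'.Nodup := (down_perm hd).nodup_iff.1 hw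

/-- Master description of a down move. -/
lemma down_spec (hw : w.Nodup) (hd : Down w w') :
    ∃ x y p q, x < y ∧ x < p ∧ p < y ∧ x < q ∧ q < y ∧
      Inv w x y ∧ ¬ Inv w' x y ∧
      Inv w x p ∧ ¬ Inv w p y ∧ Inv w q y ∧ ¬ Inv w x q ∧
      ∀ a b, ¬(a = x ∧ b = y) → (Inv w a b ↔ Inv w' a b) := by
  obtain ⟨al, bl, x, y, p, q, hxy, hpal, hqbl, hxp, hpy, hxq, hqy, hweq, hw'eq⟩ := hd
  have hw'n : w'.Nodup :=
    down_nodup ⟨al, bl, x, y, p, q, hxy, hpal, hqbl, hxp, hpy, hxq, hqy, hweq, hw'eq⟩ hw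
  have hiy : w.idxOf y = al.length := idx_u hw hweq
  have hix : w.idxOf x = al.length + 1 := idx_v hw hweq
  have hix' : w'.idxOf x = al.length := idx_u hw'n hw'eq
  have hiy' : w'.idxOf y = al.length + 1 := idx_v hw'n hw'eq
  have hxw : x ∈ w := by subst hweq; simp
  have hyw : y ∈ w := by subst hweq; simp
  have hpw : p ∈ w := by subst hweq; simp [hpal]
  have hqw : q ∈ w := by subst hweq; simp [hqbl]
  have hmem : ∀ a : ℕ, a ∈ w ↔ a ∈ w' := fun a => mem_swap hweq hw'eq
  have hip : w.idxOf p < al.length := (idx_mem_prefix hweq hpal).2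
  have hiq : al.length + 1 < w.idxOf q := by
    rw [idx_mem_suffix hw hweq hqbl]; omega
  have hother : ∀ e ∈ w, e ≠ x → e ≠ y →
      w.idxOf e ≠ al.length ∧ w.idxOf e ≠ al.length + 1 ∧ w'.idxOf e = w.idxOf e := by
    intro e he hex hey
    refine ⟨fun hc => hey ((List.idxOf_inj he).1 (by rw [hc, hiy])),
      fun hc => hex ((List.idxOf_inj he).1 (by rw [hc, hix])),
      idx_swap hw hw'n hweq hw'eq he hey hex⟩
  have key2 : ∀ c d, c ∈ w → d ∈ w → ¬(c = x ∧ d = y) → ¬(c = y ∧ d = x) →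
      (w.idxOf c < w.idxOf d ↔ w'.idxOf c < w'.idxOf d) := by
    intro c d hc hd hne1 hne2
    have hcfacts : (c = x ∧ w.idxOf c = al.length + 1 ∧ w'.idxOf c = al.length) ∨
        (c = y ∧ w.idxOf c = al.length ∧ w'.idxOf c = al.length + 1) ∨
        (c ≠ x ∧ c ≠ y ∧ w.idxOf c ≠ al.length ∧ w.idxOf c ≠ al.length + 1 ∧
          w'.idxOf c = w.idxOf c) := by
      by_cases hcx : c = x
      · subst hcx; exact Or.inl ⟨rfl, hix, hix'⟩
      · by_cases hcy : c = y
        · subst hcy; exact Or.inr (Or.inl ⟨rfl, hiy, hiy'⟩)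
        · exact Or.inr (Or.inr ⟨hcx, hcy, hother c hc hcx hcy⟩)
    have hdfacts : (d = x ∧ w.idxOf d = al.length + 1 ∧ w'.idxOf d = al.length) ∨
        (d = y ∧ w.idxOf d = al.length ∧ w'.idxOf d = al.length + 1) ∨
        (d ≠ x ∧ d ≠ y ∧ w.idxOf d ≠ al.length ∧ w.idxOf d ≠ al.length + 1 ∧
          w'.idxOf d = w.idxOf d) := by
      by_cases hdx : d = x
      · subst hdx; exact Or.inl ⟨rfl, hix, hix'⟩
      · by_cases hdy : d = y
        · subst hdy; exact Or.inr (Or.inl ⟨rfl, hiy, hiy'⟩)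
        · exact Or.inr (Or.inr ⟨hdx, hdy, hother d hd hdx hdy⟩)
    rcases hcfacts with ⟨hc1, hc2, hc3⟩ | ⟨hc1, hc2, hc3⟩ | ⟨hc0, hc1, hc2, hc2', hc3⟩ <;>
      rcases hdfacts with ⟨hd1, hd2, hd3⟩ | ⟨hd1, hd2, hd3⟩ | ⟨hd0, hd1, hd2, hd2', hd3⟩
    · omega
    · exact absurd ⟨hc1, hd1⟩ hne1
    · omega
    · exact absurd ⟨hc1, hd1⟩ hne2
    · omega
    · omega
    · omega
    · omega
    · omega
  refine ⟨x, y, p, q, hxy, hxp, hpy, hxq, hqy, ?_, ?_, ?_, ?_, ?_, ?_, ?_⟩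
  · exact ⟨hxy, hxw, hyw, by omega⟩
  · rintro ⟨-, -, -, hlt⟩; omega
  · exact ⟨hxp, hxw, hpw, by omega⟩
  · rintro ⟨-, -, -, hlt⟩; omega
  · exact ⟨hqy, hqw, hyw, by omega⟩
  · rintro ⟨-, -, -, hlt⟩; omega
  · intro a b hne
    constructor
    · rintro ⟨h1, h2, h3, h4⟩
      exact ⟨h1, (hmem a).1 h2, (hmem b).1 h3,
        (key2 b a h3 h2 (by rintro ⟨rfl, rfl⟩; omega)
          (by rintro ⟨rfl, rfl⟩; exact hne ⟨rfl, rfl⟩)).1 h4⟩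
    · rintro ⟨h1, h2, h3, h4⟩
      exact ⟨h1, (hmem a).2 h2, (hmem b).2 h3,
        (key2 b a ((hmem b).2 h3) ((hmem a).2 h2) (by rintro ⟨rfl, rfl⟩; omega)
          (by rintro ⟨rfl, rfl⟩; exact hne ⟨rfl, rfl⟩)).2 h4⟩


lemma decomp_adjacent {w : List ℕ} {x y : ℕ} (hx : x ∈ w) (hy : y ∈ w)
    (hadj : w.idxOf x = w.idxOf y + 1) :
    ∃ al bl, w = al ++ y :: x :: bl ∧ al.length = w.idxOf y := by
  have hiy : w.idxOf y < w.length := List.idxOf_lt_length_iff.2 hy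
  have hix : w.idxOf x < w.length := List.idxOf_lt_length_iff.2 hx
  refine ⟨w.take (w.idxOf y), w.drop (w.idxOf y + 2), ?_, ?_⟩
  · conv_lhs => rw [← List.take_append_drop (w.idxOf y) w]
    congr 1
    rw [List.drop_eq_getElem_cons hiy]
    congr 1
    · exact List.getElem_idxOf hiy
    rw [List.drop_eq_getElem_cons (by omega)]
    congr 1
    · simp only [← hadj]; exact List.getElem_idxOf hix
  · rw [List.length_take]; omega

lemma down_construct {w : List ℕ} (hw : w.Nodup) {x y p q : ℕ}
    (hxy : x < y) (hxp : x < p) (hpy : p < y) (hxq : x < q) (hqy : q < y)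
    (hx : x ∈ w) (hy : y ∈ w) (hp : p ∈ w) (hq : q ∈ w)
    (hadj : w.idxOf x = w.idxOf y + 1)
    (hpb : w.idxOf p < w.idxOf y) (hqa : w.idxOf x < w.idxOf q) :
    ∃ w', Down w w' := by
  obtain ⟨al, bl, hdec, hlen⟩ := decomp_adjacent hx hy hadj
  have hpal : p ∈ al := (mem_prefix_iff hw hdec hp).2 (by omega)
  have hqbl : q ∈ bl := (mem_suffix_iff hw hdec hq).2 (by omega)
  exact ⟨al ++ x :: y :: bl, al, bl, x, y, p, q, hxy, hpal, hqbl, hxp, hpy, hxq, hqy, hdec, rfl⟩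

lemma ne_of_sep {X Y Z : List ℕ} {a b : ℕ} (hw : (X ++ a :: (Y ++ b :: Z)).Nodup) : a ≠ b := by
  intro he
  have h2 := hw.of_append_right
  rw [List.nodup_cons] at h2
  exact (he ▸ h2.1) (by simp)

lemma step_down {w w' : List ℕ} (hw : w.Nodup) (h : BaxterStep w w') :
    Down w w' ∨ Down w' w := by
  obtain ⟨P, S, u, v, hadj, hwu, hwv⟩ := h
  rcases hadj with ⟨a, b, c, d, ul, vl, hab, hbc, hcd, hu, hv⟩ |
    ⟨a, b, c, d, ul, vl, hab, hbc, hcd, hu, hv⟩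
  · right
    subst hu hv hwu hwv
    have e1 : P ++ (c :: (ul ++ a :: d :: (vl ++ [b]))) ++ S
        = (P ++ c :: ul) ++ a :: ((d :: vl) ++ b :: S) := by simp
    have e2 : P ++ (c :: (ul ++ a :: d :: (vl ++ [b]))) ++ S
        = P ++ c :: ((ul ++ [a]) ++ d :: (vl ++ b :: S)) := by simp
    have hab' : a ≠ b := ne_of_sep (e1 ▸ hw)
    have hcd' : c ≠ d := ne_of_sep (e2 ▸ hw)
    refine ⟨P ++ c :: ul, vl ++ b :: S, a, d, c, b, by omega, by simp, by simp,
      by omega, by omega, by omega, by omega, ?_, ?_⟩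
    · simp
    · simp
  · left
    subst hu hv hwu hwv
    refine ⟨P ++ b :: ul, vl ++ c :: S, a, d, b, c, by omega, by simp, by simp,
      by omega, by omega, by omega, by omega, ?_, ?_⟩
    · simp
    · simp

lemma step_of_down {w w' : List ℕ} (hw : w.Nodup) (h : Down w w') :
    BaxterStep w w' ∨ BaxterStep w' w := by
  obtain ⟨al, bl, x, y, p, q, hxy, hpal, hqbl, hxp, hpy, hxq, hqy, hweq, hw'eq⟩ := h
  obtain ⟨al1, al2, rfl⟩ := List.append_of_mem hpal
  obtain ⟨bl1, bl2, rfl⟩ := List.append_of_mem hqbl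
  have e : w = al1 ++ p :: ((al2 ++ y :: x :: bl1) ++ q :: bl2) := by rw [hweq]; simp
  have hpq : p ≠ q := ne_of_sep (e ▸ hw)
  rcases lt_or_gt_of_ne hpq with hlt | hgt
  · left
    refine ⟨al1, bl2, p :: (al2 ++ y :: x :: (bl1 ++ [q])), p :: (al2 ++ x :: y :: (bl1 ++ [q])),
      Or.inr ⟨x, p, q, y, al2, bl1, hxp, le_of_lt hlt, hqy, rfl, rfl⟩, ?_, ?_⟩
    · rw [hweq]; simp
    · rw [hw'eq]; simp
  · right
    refine ⟨al1, bl2, p :: (al2 ++ x :: y :: (bl1 ++ [q])), p :: (al2 ++ y :: x :: (bl1 ++ [q])),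
      Or.inl ⟨x, q, p, y, al2, bl1, le_of_lt hxq, hgt, le_of_lt hpy, rfl, rfl⟩, ?_, ?_⟩
    · rw [hw'eq]; simp
    · rw [hweq]; simp

lemma baxterStep_perm {w w' : List ℕ} (h : BaxterStep w w') : w.Perm w' := by
  obtain ⟨P, S, u, v, hadj, hwu, hwv⟩ := h
  subst hwu hwv
  have huv : u.Perm v := by
    rcases hadj with ⟨a, b, c, d, ul, vl, -, -, -, hu, hv⟩ |
      ⟨a, b, c, d, ul, vl, -, -, -, hu, hv⟩ <;> subst hu hv
    · exact List.Perm.cons c (List.Perm.append_left ul (List.Perm.swap d a _))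
    · exact List.Perm.cons b (List.Perm.append_left ul (List.Perm.swap a d _))
  exact List.Perm.append_right S (List.Perm.append_left P huv)

lemma baxterEquiv_perm {w w' : List ℕ} (h : BaxterEquiv w w') : w.Perm w' := by
  induction h with
  | rel a b hab => exact baxterStep_perm hab
  | refl a => exact List.Perm.refl a
  | symm a b _ ih => exact ih.symm
  | trans a b c _ _ ih1 ih2 => exact ih1.trans ih2

lemma baxterEquiv_of_down {w w' : List ℕ} (hw : w.Nodup) (h : Down w w') : BaxterEquiv w w' :=
  (step_of_down hw h).elim (Relation.EqvGen.rel _ _)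
    (fun hs => Relation.EqvGen.symm _ _ (Relation.EqvGen.rel _ _ hs))

noncomputable def invF (w : List ℕ) : Finset (ℕ × ℕ) :=
  (w.toFinset ×ˢ w.toFinset).filter fun pr => Inv w pr.1 pr.2

lemma mem_invF {w : List ℕ} {pr : ℕ × ℕ} : pr ∈ invF w ↔ Inv w pr.1 pr.2 := by
  unfold invF
  simp only [Finset.mem_filter, Finset.mem_product, List.mem_toFinset]
  exact ⟨fun h => h.2, fun h => ⟨⟨h.2.1, h.2.2.1⟩, h⟩⟩

lemma down_invF {w w' : List ℕ} (hw : w.Nodup) (hd : Down w w') :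
    ∃ xy, xy ∈ invF w ∧ invF w' = (invF w).erase xy := by
  obtain ⟨x, y, p, q, -, -, -, -, -, hxy, hxy', -, -, -, -, hiff⟩ := down_spec hw hd
  refine ⟨(x, y), mem_invF.2 hxy, ?_⟩
  ext pr
  rw [Finset.mem_erase, mem_invF, mem_invF]
  constructor
  · intro h
    have hne : ¬(pr.1 = x ∧ pr.2 = y) := by
      rintro ⟨h1, h2⟩
      exact hxy' (by rwa [← h1, ← h2])
    refine ⟨?_, (hiff pr.1 pr.2 hne).2 h⟩
    intro he
    exact hne ⟨by rw [he], by rw [he]⟩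
  · rintro ⟨hne, h⟩
    refine (hiff pr.1 pr.2 ?_).1 h
    rintro ⟨h1, h2⟩
    exact hne (by rw [← h1, ← h2])

lemma down_card {w w' : List ℕ} (hw : w.Nodup) (hd : Down w w') :
    (invF w').card < (invF w).card := by
  obtain ⟨xy, hmem, herase⟩ := down_invF hw hd
  rw [herase]
  exact Finset.card_erase_lt_of_mem hmem

lemma down_inv_subset {w w' : List ℕ} (hw : w.Nodup) (hd : Down w w') :
    ∀ a b, Inv w' a b → Inv w a b := by
  intro a b h
  obtain ⟨xy, hmem, herase⟩ := down_invF hw hd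
  have : (a, b) ∈ invF w' := mem_invF.2 h
  rw [herase] at this
  exact mem_invF.1 (Finset.mem_of_mem_erase this)

end DownFacts

section ARS

variable {A : Type*} {r : A → A → Prop} {mu : A → ℕ}

def NormalF (r : A → A → Prop) (a : A) : Prop := ∀ b, ¬ r a b

theorem newman (hm : ∀ a b, r a b → mu b < mu a)
    (lc : ∀ a b c, r a b → r a c → Relation.Join (Relation.ReflTransGen r) b c) :
    ∀ n a, mu a ≤ n → ∀ b c, Relation.ReflTransGen r a b → Relation.ReflTransGen r a c →
      Relation.Join (Relation.ReflTransGen r) b c := by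
  intro n
  induction n with
  | zero =>
    intro a ha b c hab hac
    rcases Relation.ReflTransGen.cases_head hab with rfl | ⟨a1, ha1, -⟩
    · exact ⟨c, hac, Relation.ReflTransGen.refl⟩
    · exact absurd (hm a a1 ha1) (by omega)
  | succ n ih =>
    intro a ha b c hab hac
    rcases Relation.ReflTransGen.cases_head hab with rfl | ⟨a1, ha1, h1b⟩
    · exact ⟨c, hac, Relation.ReflTransGen.refl⟩
    rcases Relation.ReflTransGen.cases_head hac with rfl | ⟨a2, ha2, h2c⟩
    · exact ⟨b, Relation.ReflTransGen.refl, hab⟩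
    obtain ⟨d, hd1, hd2⟩ := lc a a1 a2 ha1 ha2
    obtain ⟨e, he1, he2⟩ := ih a1 (by have := hm a a1 ha1; omega) b d h1b hd1
    obtain ⟨f, hf1, hf2⟩ := ih a2 (by have := hm a a2 ha2; omega) c e h2c (hd2.trans he2)
    exact ⟨f, he1.trans hf2, hf1⟩

theorem eqv_join (hm : ∀ a b, r a b → mu b < mu a)
    (lc : ∀ a b c, r a b → r a c → Relation.Join (Relation.ReflTransGen r) b c)
    {a b : A} (h : Relation.EqvGen r a b) :
    Relation.Join (Relation.ReflTransGen r) a b := by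
  induction h with
  | rel a b hab => exact ⟨b, Relation.ReflTransGen.single hab, Relation.ReflTransGen.refl⟩
  | refl a => exact ⟨a, Relation.ReflTransGen.refl, Relation.ReflTransGen.refl⟩
  | symm a b _ ih => obtain ⟨d, h1, h2⟩ := ih; exact ⟨d, h2, h1⟩
  | trans a b c _ _ ih1 ih2 =>
    obtain ⟨d1, h1, h2⟩ := ih1
    obtain ⟨d2, h3, h4⟩ := ih2
    obtain ⟨e, he1, he2⟩ := newman hm lc (mu b) b (le_refl _) d1 d2 h2 h3
    exact ⟨e, h1.trans he1, h4.trans he2⟩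

lemma rtg_normal {a d : A} (ha : NormalF r a) (h : Relation.ReflTransGen r a d) : a = d := by
  rcases Relation.ReflTransGen.cases_head h with rfl | ⟨a1, ha1, -⟩
  · rfl
  · exact absurd ha1 (ha a1)

theorem normal_unique (hm : ∀ a b, r a b → mu b < mu a)
    (lc : ∀ a b c, r a b → r a c → Relation.Join (Relation.ReflTransGen r) b c)
    {a b : A} (ha : NormalF r a) (hb : NormalF r b) (h : Relation.EqvGen r a b) : a = b := by
  obtain ⟨d, h1, h2⟩ := eqv_join hm lc h
  rw [rtg_normal ha h1, rtg_normal hb h2]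

lemma rtg_flip {a b : A} (h : Relation.ReflTransGen r a b) :
    Relation.ReflTransGen (fun x y => r y x) b a := by
  induction h with
  | refl => exact Relation.ReflTransGen.refl
  | tail _ h2 ih => exact Relation.ReflTransGen.head h2 ih

end ARS

section SwapKey

variable {w w' al bl : List ℕ} {u v : ℕ}

lemma swap_key (hw : w.Nodup) (h : w = al ++ u :: v :: bl) (h' : w' = al ++ v :: u :: bl) :
    ∀ a b, ¬(a = u ∧ b = v) → ¬(a = v ∧ b = u) → (Inv w a b ↔ Inv w' a b) := by
  have huv : u ≠ v := (nodup_decomp hw h).2.2.1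
  have hperm : w.Perm w' := by
    subst h h'; exact List.Perm.append_left al (List.Perm.swap v u bl)
  have hw'n : w'.Nodup := hperm.nodup_iff.1 hw
  have hiu : w.idxOf u = al.length := idx_u hw h
  have hiv : w.idxOf v = al.length + 1 := idx_v hw h
  have hiv' : w'.idxOf v = al.length := idx_u hw'n h'
  have hiu' : w'.idxOf u = al.length + 1 := idx_v hw'n h'
  have huw : u ∈ w := by subst h; simp
  have hvw : v ∈ w := by subst h; simp
  have hmem : ∀ a : ℕ, a ∈ w ↔ a ∈ w' := fun a => mem_swap h h'
  have hother : ∀ e ∈ w, e ≠ u → e ≠ v →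
      w.idxOf e ≠ al.length ∧ w.idxOf e ≠ al.length + 1 ∧ w'.idxOf e = w.idxOf e := by
    intro e he heu hev
    refine ⟨fun hc => heu ((List.idxOf_inj he).1 (by rw [hc, hiu])),
      fun hc => hev ((List.idxOf_inj he).1 (by rw [hc, hiv])),
      idx_swap hw hw'n h h' he heu hev⟩
  have key2 : ∀ c d, c ∈ w → d ∈ w → ¬(c = u ∧ d = v) → ¬(c = v ∧ d = u) →
      (w.idxOf c < w.idxOf d ↔ w'.idxOf c < w'.idxOf d) := by
    intro c d hc hd hne1 hne2
    have hcfacts : (c = u ∧ w.idxOf c = al.length ∧ w'.idxOf c = al.length + 1) ∨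
        (c = v ∧ w.idxOf c = al.length + 1 ∧ w'.idxOf c = al.length) ∨
        (c ≠ u ∧ c ≠ v ∧ w.idxOf c ≠ al.length ∧ w.idxOf c ≠ al.length + 1 ∧
          w'.idxOf c = w.idxOf c) := by
      by_cases hcu : c = u
      · subst hcu; exact Or.inl ⟨rfl, hiu, hiu'⟩
      · by_cases hcv : c = v
        · subst hcv; exact Or.inr (Or.inl ⟨rfl, hiv, hiv'⟩)
        · exact Or.inr (Or.inr ⟨hcu, hcv, hother c hc hcu hcv⟩)
    have hdfacts : (d = u ∧ w.idxOf d = al.length ∧ w'.idxOf d = al.length + 1) ∨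
        (d = v ∧ w.idxOf d = al.length + 1 ∧ w'.idxOf d = al.length) ∨
        (d ≠ u ∧ d ≠ v ∧ w.idxOf d ≠ al.length ∧ w.idxOf d ≠ al.length + 1 ∧
          w'.idxOf d = w.idxOf d) := by
      by_cases hdu : d = u
      · subst hdu; exact Or.inl ⟨rfl, hiu, hiu'⟩
      · by_cases hdv : d = v
        · subst hdv; exact Or.inr (Or.inl ⟨rfl, hiv, hiv'⟩)
        · exact Or.inr (Or.inr ⟨hdu, hdv, hother d hd hdu hdv⟩)
    rcases hcfacts with ⟨hc1, hc2, hc3⟩ | ⟨hc1, hc2, hc3⟩ | ⟨hc0, hc1, hc2, hc2', hc3⟩ <;>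
      rcases hdfacts with ⟨hd1, hd2, hd3⟩ | ⟨hd1, hd2, hd3⟩ | ⟨hd0, hd1, hd2, hd2', hd3⟩
    · omega
    · exact absurd ⟨hc1, hd1⟩ hne1
    · omega
    · exact absurd ⟨hc1, hd1⟩ hne2
    · omega
    · omega
    · omega
    · omega
    · omega
  intro a b hne1 hne2
  constructor
  · rintro ⟨h1, h2, h3, h4⟩
    exact ⟨h1, (hmem a).1 h2, (hmem b).1 h3,
      (key2 b a h3 h2 (by rintro ⟨e1, e2⟩; exact hne2 ⟨e2, e1⟩)
        (by rintro ⟨e1, e2⟩; exact hne1 ⟨e2, e1⟩)).1 h4⟩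
  · rintro ⟨h1, h2, h3, h4⟩
    exact ⟨h1, (hmem a).2 h2, (hmem b).2 h3,
      (key2 b a ((hmem b).2 h3) ((hmem a).2 h2) (by rintro ⟨e1, e2⟩; exact hne2 ⟨e2, e1⟩)
        (by rintro ⟨e1, e2⟩; exact hne1 ⟨e2, e1⟩)).2 h4⟩

end SwapKey

section Permuto

lemma down_permutoStep {w w' : List ℕ} (h : Down w w') : PermutoStep w' w := by
  obtain ⟨al, bl, x, y, p, q, hxy, -, -, -, -, -, -, hweq, hw'eq⟩ := h
  exact ⟨al, bl, x, y, hxy, hw'eq, hweq⟩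

lemma permutoStep_perm {σ ν : List ℕ} (h : PermutoStep σ ν) : σ.Perm ν := by
  obtain ⟨P, S, a, b, hab, h1, h2⟩ := h
  subst h1 h2
  exact List.Perm.append_left P (List.Perm.swap b a S)

lemma permutoStep_inv {σ ν : List ℕ} (hσ : σ.Nodup) (h : PermutoStep σ ν) :
    ∀ a b, Inv σ a b → Inv ν a b := by
  obtain ⟨P, S, a0, b0, hab, h1, h2⟩ := h
  intro a b hinv
  by_cases hc1 : a = a0 ∧ b = b0
  · exfalso
    obtain ⟨rfl, rfl⟩ := hc1
    have h1' : σ.idxOf a = P.length := idx_u hσ h1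
    have h2' : σ.idxOf b = P.length + 1 := idx_v hσ h1
    obtain ⟨-, -, -, hlt⟩ := hinv
    omega
  · by_cases hc2 : a = b0 ∧ b = a0
    · exfalso; obtain ⟨rfl, rfl⟩ := hc2; obtain ⟨hlt, -, -, -⟩ := hinv; omega
    · exact (swap_key hσ h1 h2 a b hc1 hc2).1 hinv

lemma permutoLe_inv {σ ν : List ℕ} (h : PermutoLe σ ν) (hσ : σ.Nodup) :
    σ.Perm ν ∧ ∀ a b, Inv σ a b → Inv ν a b := by
  induction h with
  | refl => exact ⟨List.Perm.refl σ, fun _ _ h => h⟩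
  | tail h1 h2 ih =>
    have hb := ih.1.nodup_iff.1 hσ
    exact ⟨ih.1.trans (permutoStep_perm h2), fun a b hi =>
      permutoStep_inv hb h2 a b (ih.2 a b hi)⟩

end Permuto

section Rev

lemma down_rev {w w' : List ℕ} (h : Down w w') : Down w'.reverse w.reverse := by
  obtain ⟨al, bl, x, y, p, q, hxy, hpal, hqbl, hxp, hpy, hxq, hqy, hweq, hw'eq⟩ := h
  refine ⟨bl.reverse, al.reverse, x, y, q, p, hxy, ?_, ?_, hxq, hqy, hxp, hpy, ?_, ?_⟩
  · rwa [List.mem_reverse]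
  · rwa [List.mem_reverse]
  · rw [hw'eq]; simp
  · rw [hweq]; simp

lemma idx_rev {u : List ℕ} {a : ℕ} (hu : u.Nodup) (ha : a ∈ u) :
    u.reverse.idxOf a = u.length - 1 - u.idxOf a := by
  have hia : u.idxOf a < u.length := List.idxOf_lt_length_iff.2 ha
  have har : a ∈ u.reverse := List.mem_reverse.2 ha
  have hir : u.reverse.idxOf a < u.reverse.length := List.idxOf_lt_length_iff.2 har
  have h1 : u.reverse[u.reverse.idxOf a] = a := List.getElem_idxOf hir
  have hlen : u.reverse.length = u.length := List.length_reverse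
  have h2 : u.reverse[u.reverse.idxOf a] = u[u.length - 1 - u.reverse.idxOf a]'(by omega) := by
    rw [List.getElem_reverse]
  have h3 : u[u.idxOf a] = a := List.getElem_idxOf hia
  have h4 : u[u.length - 1 - u.reverse.idxOf a]'(by omega) = u[u.idxOf a]'hia := by
    rw [← h2, h1, h3]
  have h5 := (List.Nodup.getElem_inj_iff hu).1 h4
  omega

lemma inv_rev {u : List ℕ} {a b : ℕ} (hu : u.Nodup) :
    Inv u.reverse a b ↔ (a < b ∧ a ∈ u ∧ b ∈ u ∧ ¬ Inv u a b) := by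
  constructor
  · rintro ⟨hab, ha, hb, hlt⟩
    rw [List.mem_reverse] at ha hb
    have hia := idx_rev hu ha
    have hib := idx_rev hu hb
    have hane : a ≠ b := Nat.ne_of_lt hab
    have hine : u.idxOf a ≠ u.idxOf b := fun hc => hane ((List.idxOf_inj ha).1 hc)
    have h1 : u.idxOf a < u.length := List.idxOf_lt_length_iff.2 ha
    have h2 : u.idxOf b < u.length := List.idxOf_lt_length_iff.2 hb
    refine ⟨hab, ha, hb, ?_⟩
    rintro ⟨-, -, -, hlt2⟩
    omega
  · rintro ⟨hab, ha, hb, hn⟩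
    have hia := idx_rev hu ha
    have hib := idx_rev hu hb
    have hane : a ≠ b := Nat.ne_of_lt hab
    have hine : u.idxOf a ≠ u.idxOf b := fun hc => hane ((List.idxOf_inj ha).1 hc)
    have h1 : u.idxOf a < u.length := List.idxOf_lt_length_iff.2 ha
    have h2 : u.idxOf b < u.length := List.idxOf_lt_length_iff.2 hb
    have hn' : ¬ (u.idxOf b < u.idxOf a) := fun hc => hn ⟨hab, ha, hb, hc⟩
    exact ⟨hab, List.mem_reverse.2 ha, List.mem_reverse.2 hb, by omega⟩

end Rev

section NF

open scoped Classical

def DownN (u v : List ℕ) : Prop := Down u v ∧ u.Nodup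

lemma downN_card {u v : List ℕ} (h : DownN u v) : (invF v).card < (invF u).card :=
  down_card h.2 h.1

lemma downN_nodup {u v : List ℕ} (h : DownN u v) : v.Nodup := down_nodup h.1 h.2

lemma exists_nf : ∀ n (w : List ℕ), (invF w).card ≤ n → w.Nodup →
    ∃ m, Relation.ReflTransGen DownN w m ∧ NormalF DownN m := by
  intro n
  induction n with
  | zero =>
    intro w hc hw
    by_cases h : ∃ w', DownN w w'
    · obtain ⟨w', hw'⟩ := h; have := downN_card hw'; omega
    · exact ⟨w, Relation.ReflTransGen.refl, fun b hb => h ⟨b, hb⟩⟩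
  | succ n ih =>
    intro w hc hw
    by_cases h : ∃ w', DownN w w'
    · obtain ⟨w', hw'⟩ := h
      obtain ⟨m, hm1, hm2⟩ := ih w' (by have := downN_card hw'; omega) (downN_nodup hw')
      exact ⟨m, Relation.ReflTransGen.head hw' hm1, hm2⟩
    · exact ⟨w, Relation.ReflTransGen.refl, fun b hb => h ⟨b, hb⟩⟩

lemma mem_shuffle1 {γ bl : List ℕ} {x y q : ℕ} (h : q ∈ γ ++ y :: x :: bl) :
    q ∈ γ ++ x :: y :: bl := by
  simp only [List.mem_append, List.mem_cons] at h ⊢; tauto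

lemma down_lc_aux {w w1 w2 al bl al' bl' : List ℕ} {x y p q x' y' p' q' : ℕ}
    (hw : w.Nodup)
    (hxy : x < y) (hpal : p ∈ al) (hqbl : q ∈ bl)
    (hxp : x < p) (hpy : p < y) (hxq : x < q) (hqy : q < y)
    (hweq : w = al ++ y :: x :: bl) (hw1 : w1 = al ++ x :: y :: bl)
    (hxy' : x' < y') (hpal' : p' ∈ al') (hqbl' : q' ∈ bl')
    (hxp' : x' < p') (hpy' : p' < y') (hxq' : x' < q') (hqy' : q' < y')
    (hweq' : w = al' ++ y' :: x' :: bl') (hw2 : w2 = al' ++ x' :: y' :: bl')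
    (hle : al.length ≤ al'.length) :
    Relation.Join (Relation.ReflTransGen DownN) w1 w2 := by
  have hD1 : Down w w1 := ⟨al, bl, x, y, p, q, hxy, hpal, hqbl, hxp, hpy, hxq, hqy, hweq, hw1⟩
  have hD2 : Down w w2 := ⟨al', bl', x', y', p', q', hxy', hpal', hqbl', hxp', hpy', hxq', hqy',
    hweq', hw2⟩
  have hw1n : w1.Nodup := down_nodup hD1 hw
  have hw2n : w2.Nodup := down_nodup hD2 hw
  have heq : al ++ y :: x :: bl = al' ++ y' :: x' :: bl' := by rw [← hweq, ← hweq']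
  have hcase : ∃ γ : List ℕ, al' = al ++ γ ∧ y :: x :: bl = γ ++ y' :: x' :: bl' := by
    rcases List.append_eq_append_iff.1 heq with ⟨γ, hc, hb⟩ | ⟨γ, hc, hb⟩
    · exact ⟨γ, hc, hb⟩
    · have hγ : γ = [] := by
        have := congrArg List.length hc; simp at this
        exact List.eq_nil_of_length_eq_zero (by omega)
      subst hγ
      simp only [List.append_nil] at hc
      exact ⟨[], by simp [hc], by simpa using hb.symm⟩
  obtain ⟨γ, hal', htail⟩ := hcase
  rcases γ with _ | ⟨g, γt⟩
  · simp only [List.nil_append, List.cons.injEq] at htail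
    obtain ⟨rfl, rfl, rfl⟩ := htail
    simp only [List.append_nil] at hal'
    subst hal'
    refine ⟨w1, Relation.ReflTransGen.refl, ?_⟩
    have : w2 = w1 := by rw [hw2, hw1]
    rw [this]
  rcases γt with _ | ⟨g2, γ'⟩
  · -- overlap case: γ = [g]
    simp only [List.cons_append, List.nil_append, List.cons.injEq] at htail
    obtain ⟨rfl, rfl, rfl⟩ := htail
    subst hal'
    -- now : w = al ++ y::x::x'::bl', y' = x, al' = al ++ [y], bl = x'::bl'
    have hp'al : p' ∈ al := by
      rcases List.mem_append.1 hpal' with h | h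
      · exact h
      · exfalso; simp only [List.mem_singleton] at h; omega
    have hqbl'2 : q ∈ bl' := by
      rcases List.mem_cons.1 hqbl with h | h
      · exfalso; omega
      · exact h
    have s1 : Down w1 (al ++ x :: x' :: y :: bl') :=
      ⟨al ++ [x], bl', x', y, x, q', by omega, by simp, hqbl', hxy', hxy,
        hxq', by omega, by rw [hw1]; simp, by simp⟩
    have s2 : Down (al ++ x :: x' :: y :: bl') (al ++ x' :: x :: y :: bl') :=
      ⟨al, y :: bl', x', x, p', q', hxy', hp'al, by simp [hqbl'], hxp',
        hpy', hxq', hqy', by simp, by simp⟩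
    have s3 : Down w2 (al ++ x' :: y :: x :: bl') :=
      ⟨al, x :: bl', x', y, p, x, by omega, hpal, by simp, by omega, hpy,
        hxy', by omega, by rw [hw2]; simp, by simp⟩
    have s4 : Down (al ++ x' :: y :: x :: bl') (al ++ x' :: x :: y :: bl') :=
      ⟨al ++ [x'], bl', x, y, p, q, hxy, by simp [hpal], hqbl'2, hxp, hpy,
        by omega, by omega, by simp, by simp⟩
    have hn1 := down_nodup s1 hw1n
    have hn3 := down_nodup s3 hw2n
    exact ⟨al ++ x' :: x :: y :: bl',
      Relation.ReflTransGen.head ⟨s1, hw1n⟩ (Relation.ReflTransGen.single ⟨s2, hn1⟩),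
      Relation.ReflTransGen.head ⟨s3, hw2n⟩ (Relation.ReflTransGen.single ⟨s4, hn3⟩)⟩
  · -- disjoint case: γ = g::g2::γ'
    simp only [List.cons_append, List.cons.injEq] at htail
    obtain ⟨rfl, rfl, rfl⟩ := htail
    subst hal'
    have s1 : Down w1 (al ++ x :: y :: (γ' ++ x' :: y' :: bl')) :=
      ⟨al ++ x :: y :: γ', bl', x', y', p', q', hxy', mem_shuffle1 hpal', hqbl',
        hxp', hpy', hxq', hqy', by rw [hw1]; simp, by simp⟩
    have s2 : Down w2 (al ++ x :: y :: (γ' ++ x' :: y' :: bl')) :=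
      ⟨al, γ' ++ x' :: y' :: bl', x, y, p, q, hxy, hpal, mem_shuffle1 hqbl,
        hxp, hpy, hxq, hqy, by rw [hw2]; simp, by simp⟩
    exact ⟨al ++ x :: y :: (γ' ++ x' :: y' :: bl'),
      Relation.ReflTransGen.single ⟨s1, hw1n⟩, Relation.ReflTransGen.single ⟨s2, hw2n⟩⟩

lemma downN_lc : ∀ w w1 w2, DownN w w1 → DownN w w2 →
    Relation.Join (Relation.ReflTransGen DownN) w1 w2 := by
  intro w w1 w2 h1 h2
  have hw : w.Nodup := h1.2
  obtain ⟨al, bl, x, y, p, q, hxy, hpal, hqbl, hxp, hpy, hxq, hqy, hweq, hw1⟩ := h1.1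
  obtain ⟨al', bl', x', y', p', q', hxy', hpal', hqbl', hxp', hpy', hxq', hqy', hweq', hw2⟩ := h2.1
  rcases le_total al.length al'.length with hle | hle
  · exact down_lc_aux hw hxy hpal hqbl hxp hpy hxq hqy hweq hw1
      hxy' hpal' hqbl' hxp' hpy' hxq' hqy' hweq' hw2 hle
  · obtain ⟨d, hd1, hd2⟩ := down_lc_aux hw hxy' hpal' hqbl' hxp' hpy' hxq' hqy' hweq' hw2
      hxy hpal hqbl hxp hpy hxq hqy hweq hw1 hle
    exact ⟨d, hd2, hd1⟩

def Stp (u v : List ℕ) : Prop := DownN u v ∨ DownN v u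

lemma stp_perm {u v : List ℕ} (h : Stp u v) : u.Perm v := by
  rcases h with h | h
  · exact down_perm h.1
  · exact (down_perm h.1).symm

lemma stp_equiv {u v : List ℕ} (h : Stp u v) : BaxterEquiv u v := by
  rcases h with h | h
  · exact baxterEquiv_of_down h.2 h.1
  · exact Relation.EqvGen.symm _ _ (baxterEquiv_of_down h.2 h.1)

lemma rtg_stp_symm {a b : List ℕ} (h : Relation.ReflTransGen Stp a b) :
    Relation.ReflTransGen Stp b a := by
  have := rtg_flip h
  exact Relation.ReflTransGen.mono (fun x y (hxy : Stp y x) => Or.symm hxy) _ _ this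

lemma rtg_stp_perm {a b : List ℕ} (h : Relation.ReflTransGen Stp a b) : a.Perm b := by
  induction h with
  | refl => exact List.Perm.refl _
  | tail _ h2 ih => exact ih.trans (stp_perm h2)

lemma baxterEquiv_rtg_stp {σ τ : List ℕ} (h : BaxterEquiv σ τ) :
    σ.Nodup → Relation.ReflTransGen Stp σ τ := by
  induction h with
  | rel a b hab =>
    intro ha
    rcases step_down ha hab with hd | hd
    · exact Relation.ReflTransGen.single (Or.inl ⟨hd, ha⟩)
    · exact Relation.ReflTransGen.single
        (Or.inr ⟨hd, ((baxterStep_perm hab).nodup_iff).1 ha⟩)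
  | refl a => exact fun _ => Relation.ReflTransGen.refl
  | symm a b hab ih =>
    intro hb
    exact rtg_stp_symm (ih (((baxterEquiv_perm hab).nodup_iff).2 hb))
  | trans a b c hab _ ih1 ih2 =>
    intro ha
    exact (ih1 ha).trans (ih2 (((baxterEquiv_perm hab).nodup_iff).1 ha))

lemma eqvgen_downN_of_rtg_stp {a b : List ℕ} (h : Relation.ReflTransGen Stp a b) :
    Relation.EqvGen DownN a b := by
  induction h with
  | refl => exact Relation.EqvGen.refl a
  | tail _ h2 ih =>
    refine Relation.EqvGen.trans _ _ _ ih ?_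
    rcases h2 with hd | hd
    · exact Relation.EqvGen.rel _ _ hd
    · exact Relation.EqvGen.symm _ _ (Relation.EqvGen.rel _ _ hd)

lemma rtg_downN_nodup {a b : List ℕ} (h : Relation.ReflTransGen DownN a b) (ha : a.Nodup) :
    b.Nodup := by
  induction h with
  | refl => exact ha
  | tail _ h2 _ => exact downN_nodup h2

lemma rtg_downN_inv {a b : List ℕ} (h : Relation.ReflTransGen DownN a b) :
    ∀ u v, Inv b u v → Inv a u v := by
  induction h with
  | refl => exact fun _ _ h => h
  | tail _ h2 ih => exact fun u v hi => ih u v (down_inv_subset h2.2 h2.1 u v hi)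

lemma rtg_downN_permutoLe {τ m : List ℕ} (h : Relation.ReflTransGen DownN τ m) :
    PermutoLe m τ := by
  induction h with
  | refl => exact Relation.ReflTransGen.refl
  | tail _ h2 ih => exact Relation.ReflTransGen.head (down_permutoStep h2.1) ih

lemma rtg_downN_rev_permutoLe {a b : List ℕ} (h : Relation.ReflTransGen DownN a b) :
    PermutoLe a.reverse b.reverse := by
  induction h with
  | refl => exact Relation.ReflTransGen.refl
  | tail _ h2 ih =>
    exact Relation.ReflTransGen.tail ih (down_permutoStep (down_rev h2.1))

end NF

section Classical

lemma idx_getElem {τ : List ℕ} (hn : τ.Nodup) {k : ℕ} (hk : k < τ.length) :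
    τ.idxOf (τ[k]) = k := by
  have hmem : τ[k] ∈ τ := List.getElem_mem hk
  have hlt : τ.idxOf τ[k] < τ.length := List.idxOf_lt_length_iff.2 hmem
  have h1 : τ[τ.idxOf τ[k]]'hlt = τ[k] := List.getElem_idxOf hlt
  exact (List.Nodup.getElem_inj_iff hn).1 h1

lemma idx_lt_of_not_inv {τ : List ℕ} {a b : ℕ} (hab : a < b) (ha : a ∈ τ) (hb : b ∈ τ)
    (h : ¬ Inv τ a b) : τ.idxOf a < τ.idxOf b := by
  have hne : τ.idxOf a ≠ τ.idxOf b :=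
    fun hc => (Nat.ne_of_lt hab) ((List.idxOf_inj ha).1 hc)
  have : ¬ (τ.idxOf b < τ.idxOf a) := fun hc => h ⟨hab, ha, hb, hc⟩
  omega

lemma inv_cons {a : ℕ} {t : List ℕ} (hn : (a :: t).Nodup) {x y : ℕ} (hx : x ∈ t) (hy : y ∈ t) :
    (Inv (a :: t) x y ↔ Inv t x y) := by
  have hat : a ∉ t := (List.nodup_cons.1 hn).1
  have hxa : x ≠ a := fun hc => hat (hc ▸ hx)
  have hya : y ≠ a := fun hc => hat (hc ▸ hy)
  have hix : (a :: t).idxOf x = t.idxOf x + 1 := by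
    rw [List.idxOf_cons_ne _ (Ne.symm hxa)]
  have hiy : (a :: t).idxOf y = t.idxOf y + 1 := by
    rw [List.idxOf_cons_ne _ (Ne.symm hya)]
  constructor
  · rintro ⟨h1, -, -, h4⟩
    exact ⟨h1, hx, hy, by omega⟩
  · rintro ⟨h1, -, -, h4⟩
    exact ⟨h1, by simp [hx], by simp [hy], by omega⟩

lemma eq_of_inv_eq : ∀ (u : List ℕ), ∀ v : List ℕ, u.Nodup → v.Nodup → u.Perm v →
    (∀ a b, Inv u a b ↔ Inv v a b) → u = v := by
  intro u
  induction u with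
  | nil => intro v _ _ hperm _; exact (List.Perm.eq_nil hperm.symm).symm
  | cons a u' ih =>
    intro v hun hvn hperm hiff
    rcases v with _ | ⟨c, v'⟩
    · exact absurd (List.Perm.eq_nil hperm) (by simp)
    have hac : a = c := by
      by_contra hne
      have hav : a ∈ c :: v' := hperm.mem_iff.1 (by simp)
      have hcu : c ∈ a :: u' := hperm.mem_iff.2 (by simp)
      have hau' : a ∉ u' := (List.nodup_cons.1 hun).1
      have hcv' : c ∉ v' := (List.nodup_cons.1 hvn).1
      have hcu' : c ∈ u' := by
        rcases List.mem_cons.1 hcu with h | h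
        · exact absurd h.symm hne
        · exact h
      have hav' : a ∈ v' := by
        rcases List.mem_cons.1 hav with h | h
        · exact absurd h hne
        · exact h
      have hiu : (a :: u').idxOf a = 0 := List.idxOf_cons_self
      have hiv : (c :: v').idxOf c = 0 := List.idxOf_cons_self
      have hiuc : (a :: u').idxOf c = u'.idxOf c + 1 := List.idxOf_cons_ne _ (Ne.symm (fun h => hne h.symm))
      have hiva : (c :: v').idxOf a = v'.idxOf a + 1 := List.idxOf_cons_ne _ (fun h => hne h.symm)
      rcases Nat.lt_or_ge a c with hlt | hge
      · have h1 : ¬ Inv (a :: u') a c := by rintro ⟨-, -, -, h4⟩; omega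
        have h2 : Inv (c :: v') a c := ⟨hlt, by simp [hav'], by simp, by omega⟩
        exact h1 ((hiff a c).2 h2)
      · have hlt : c < a := by omega
        have h1 : Inv (a :: u') c a := ⟨hlt, hcu, by simp, by omega⟩
        have h2 : ¬ Inv (c :: v') c a := by rintro ⟨-, -, -, h4⟩; omega
        exact h2 ((hiff c a).1 h1)
    subst hac
    have hperm' : u'.Perm v' := hperm.cons_inv
    have htail : ∀ x y, Inv u' x y ↔ Inv v' x y := by
      intro x y
      constructor
      · intro h
        have hx : x ∈ u' := h.2.1
        have hy : y ∈ u' := h.2.2.1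
        have h2 := (hiff x y).1 ((inv_cons hun hx hy).2 h)
        exact (inv_cons hvn (hperm'.mem_iff.1 hx) (hperm'.mem_iff.1 hy)).1 h2
      · intro h
        have hx : x ∈ v' := h.2.1
        have hy : y ∈ v' := h.2.2.1
        have h2 := (hiff x y).2 ((inv_cons hvn hx hy).2 h)
        exact (inv_cons hun (hperm'.mem_iff.2 hx) (hperm'.mem_iff.2 hy)).1 h2
    rw [ih v' (List.nodup_cons.1 hun).2 (List.nodup_cons.1 hvn).2 hperm' htail]

/-- If `Inv m ⊆ Inv τ` and they differ, `τ` has an adjacent descent pair not in `Inv m`. -/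
lemma exists_descent {m τ : List ℕ} (hτ : τ.Nodup) (hperm : τ.Perm m)
    (hsub : ∀ a b, Inv m a b → Inv τ a b) :
    ∀ g, ∀ a b, τ.idxOf a ≤ τ.idxOf b + g → Inv τ a b → ¬ Inv m a b →
    ∃ x y, x < y ∧ Inv τ x y ∧ ¬ Inv m x y ∧ τ.idxOf x = τ.idxOf y + 1 := by
  intro g
  induction g with
  | zero =>
    intro a b hg hi _
    obtain ⟨-, -, -, h4⟩ := hi
    omega
  | succ g ih =>
    intro a b hg hi hm
    obtain ⟨hab, haτ, hbτ, hba⟩ := hi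
    by_cases hadj : τ.idxOf a = τ.idxOf b + 1
    · exact ⟨a, b, hab, ⟨hab, haτ, hbτ, hba⟩, hm, hadj⟩
    · -- take the element just after b
      have hilen : τ.idxOf a < τ.length := List.idxOf_lt_length_iff.2 haτ
      have hblen : τ.idxOf b + 1 < τ.length := by omega
      set c := τ[τ.idxOf b + 1] with hc
      have hcτ : c ∈ τ := List.getElem_mem hblen
      have hic : τ.idxOf c = τ.idxOf b + 1 := idx_getElem hτ hblen
      have hca : c ≠ a := fun h => by rw [h] at hic; omega
      have hcb : c ≠ b := fun h => by rw [h] at hic; omega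
      have hmemm : ∀ z : ℕ, z ∈ τ ↔ z ∈ m := fun z => hperm.mem_iff
      have hmane : ∀ z1 z2 : ℕ, z1 ∈ m → z2 ∈ m → z1 ≠ z2 → m.idxOf z1 ≠ m.idxOf z2 :=
        fun z1 z2 h1 h2 hne hc => hne ((List.idxOf_inj h1).1 hc)
      -- m-index order of a,b : a before b in m
      have hmab : m.idxOf a < m.idxOf b :=
        idx_lt_of_not_inv hab ((hmemm a).1 haτ) ((hmemm b).1 hbτ) hm
      rcases Nat.lt_trichotomy c a with hlt | heq | hgt
      · -- c < a : pair (c, b) works, gap 1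
        have hinv : Inv τ c b := ⟨by omega, hcτ, hbτ, by omega⟩
        have hnm : ¬ Inv m c b := by
          rintro ⟨-, hcm, -, h4⟩
          -- then Inv m c a, so Inv τ c a, i.e. idx τ a < idx τ c : contradiction
          have : Inv m c a := ⟨hlt, hcm, (hmemm a).1 haτ, by omega⟩
          obtain ⟨-, -, -, h5⟩ := hsub c a this
          omega
        exact ih c b (by omega) hinv hnm
      · exact absurd heq.symm (Ne.symm hca)
      · rcases Nat.lt_trichotomy c b with hlt2 | heq2 | hgt2
        · -- a < c < b : one of (a,c),(c,b) not in Inv m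
          have hinv1 : Inv τ a c := ⟨hgt, haτ, hcτ, by omega⟩
          have hinv2 : Inv τ c b := ⟨hlt2, hcτ, hbτ, by omega⟩
          by_cases hm1 : Inv m a c
          · have hnm2 : ¬ Inv m c b := by
              rintro ⟨-, -, -, h4⟩
              obtain ⟨-, -, -, h5⟩ := hm1
              omega
            exact ih c b (by omega) hinv2 hnm2
          · exact ih a c (by omega) hinv1 hm1
        · exact absurd heq2.symm (Ne.symm hcb)
        · -- c > b : pair (a, c)
          have hinv : Inv τ a c := ⟨by omega, haτ, hcτ, by omega⟩
          have hnm : ¬ Inv m a c := by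
            rintro ⟨-, -, hcm, h4⟩
            have : Inv m b c := ⟨hgt2, (hmemm b).1 hbτ, hcm, by omega⟩
            obtain ⟨-, -, -, h5⟩ := hsub b c this
            omega
          exact ih a c (by omega) hinv hnm

/-- Build a down move at an adjacent descent with witnesses, recording the toggled pair. -/
lemma down_construct' {w : List ℕ} (hw : w.Nodup) {x y p q : ℕ}
    (hxy : x < y) (hxp : x < p) (hpy : p < y) (hxq : x < q) (hqy : q < y)
    (hx : x ∈ w) (hy : y ∈ w) (hp : p ∈ w) (hq : q ∈ w)
    (hadj : w.idxOf x = w.idxOf y + 1)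
    (hpb : w.idxOf p < w.idxOf y) (hqa : w.idxOf x < w.idxOf q) :
    ∃ w', Down w w' ∧ ¬ Inv w' x y ∧ (∀ a b, ¬(a = x ∧ b = y) → (Inv w a b ↔ Inv w' a b)) := by
  obtain ⟨al, bl, hdec, hlen⟩ := decomp_adjacent hx hy hadj
  have hpal : p ∈ al := (mem_prefix_iff hw hdec hp).2 (by omega)
  have hqbl : q ∈ bl := (mem_suffix_iff hw hdec hq).2 (by omega)
  refine ⟨al ++ x :: y :: bl,
    ⟨al, bl, x, y, p, q, hxy, hpal, hqbl, hxp, hpy, hxq, hqy, hdec, rfl⟩, ?_, ?_⟩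
  · have hD : Down w (al ++ x :: y :: bl) :=
      ⟨al, bl, x, y, p, q, hxy, hpal, hqbl, hxp, hpy, hxq, hqy, hdec, rfl⟩
    have hwn' : (al ++ x :: y :: bl).Nodup := down_nodup hD hw
    have h1 : (al ++ x :: y :: bl).idxOf x = al.length := idx_u hwn' rfl
    have h2 : (al ++ x :: y :: bl).idxOf y = al.length + 1 := idx_v hwn' rfl
    rintro ⟨-, -, -, h4⟩
    omega
  · intro a b hne
    by_cases hne2 : a = y ∧ b = x
    · obtain ⟨rfl, rfl⟩ := hne2
      constructor
      · rintro ⟨h1, -, -, -⟩; omega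
      · rintro ⟨h1, -, -, -⟩; omega
    · exact swap_key hw hdec rfl a b hne2 hne

end Classical

section Final

open scoped Classical

lemma baxterEquiv_of_rtg_stp {a b : List ℕ} (h : Relation.ReflTransGen Stp a b) :
    BaxterEquiv a b := by
  induction h with
  | refl => exact Relation.EqvGen.refl a
  | tail _ h2 ih => exact Relation.EqvGen.trans _ _ _ ih (stp_equiv h2)

lemma rtg_downN_stp {a b : List ℕ} (h : Relation.ReflTransGen DownN a b) :
    Relation.ReflTransGen Stp a b :=
  Relation.ReflTransGen.mono (fun _ _ hd => Or.inl hd) _ _ h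

lemma rtg_downN_rev_equiv {a b : List ℕ} (h : Relation.ReflTransGen DownN a b) :
    BaxterEquiv a.reverse b.reverse := by
  induction h with
  | refl => exact Relation.EqvGen.refl _
  | tail _ h2 ih =>
    refine Relation.EqvGen.trans _ _ _ ih (Relation.EqvGen.symm _ _ ?_)
    exact baxterEquiv_of_down (List.nodup_reverse.2 (downN_nodup h2)) (down_rev h2.1)

lemma stp_rev {u v : List ℕ} (h : Stp u v) : Stp u.reverse v.reverse := by
  rcases h with hd | hd
  · exact Or.inr ⟨down_rev hd.1, List.nodup_reverse.2 (downN_nodup hd)⟩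
  · exact Or.inl ⟨down_rev hd.1, List.nodup_reverse.2 (downN_nodup hd)⟩

lemma rtg_stp_rev {a b : List ℕ} (h : Relation.ReflTransGen Stp a b) :
    Relation.ReflTransGen Stp a.reverse b.reverse := by
  induction h with
  | refl => exact Relation.ReflTransGen.refl
  | tail _ h2 ih => exact Relation.ReflTransGen.tail ih (stp_rev h2)

lemma ext_walk {m M : List ℕ}
    (sand1 : ∀ w, Relation.ReflTransGen Stp m w → ∀ a b, Inv m a b → Inv w a b)
    (sand2 : ∀ w, Relation.ReflTransGen Stp m w → ∀ a b, Inv w a b → Inv M a b)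
    {a b : ℕ} :
    ∀ w, Relation.ReflTransGen Stp w M → Relation.ReflTransGen Stp m w →
      ¬ Inv w a b → Inv M a b →
      ((∃ p, a < p ∧ p < b ∧ Inv M a p ∧ ¬ Inv m p b) ∧
       (∃ q, a < q ∧ q < b ∧ ¬ Inv m a q ∧ Inv M q b)) := by
  intro w hwM
  induction hwM using Relation.ReflTransGen.head_induction_on with
  | refl => exact fun _ hnw hM => absurd hM hnw
  | @head w0 c step rest ih =>
    intro hre hnw hM
    by_cases hc : Inv c a b
    · rcases step with hD | hD
      · exact absurd (down_inv_subset hD.2 hD.1 a b hc) hnw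
      · obtain ⟨x, y, p, q, hxy, hxp, hpy, hxq, hqy, hIxy, hnIxy, hIxp, hnIpy, hIqy, hnIxq,
          hiff⟩ := down_spec hD.2 hD.1
        have hab_eq : a = x ∧ b = y := by
          by_contra hne
          exact hnw ((hiff a b hne).1 hc)
        obtain ⟨rfl, rfl⟩ := hab_eq
        have hrc : Relation.ReflTransGen Stp m c := hre.tail (Or.inr hD)
        exact ⟨⟨p, hxp, hpy, sand2 c hrc a p hIxp, fun hmc => hnIpy (sand1 c hrc p b hmc)⟩,
          ⟨q, hxq, hqy, fun hmc => hnIxq (sand1 c hrc a q hmc), sand2 c hrc q b hIqy⟩⟩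
    · exact ih (hre.tail step) hc hM

lemma W_lemmas {m M τ : List ℕ}
    (hE : ∀ a b, Inv M a b → ¬ Inv m a b →
      ((∃ p, a < p ∧ p < b ∧ Inv M a p ∧ ¬ Inv m p b) ∧
       (∃ q, a < q ∧ q < b ∧ ¬ Inv m a q ∧ Inv M q b)))
    (hτM : ∀ z : ℕ, z ∈ M → z ∈ τ)
    (hIm : ∀ a b, Inv m a b → Inv τ a b) (hIM : ∀ a b, Inv τ a b → Inv M a b) :
    ∀ g a b, b ≤ a + g → Inv τ a b → ¬ Inv m a b →
      (∃ v, a < v ∧ v < b ∧ v ∈ τ ∧ τ.idxOf v < τ.idxOf b) ∧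
      (∃ v, a < v ∧ v < b ∧ v ∈ τ ∧ τ.idxOf a < τ.idxOf v) := by
  intro g
  induction g with
  | zero =>
    intro a b hg hi _
    obtain ⟨h1, -, -, -⟩ := hi
    omega
  | succ g ih =>
    intro a b hg hi hm
    obtain ⟨hab, haτ, hbτ, hba⟩ := hi
    obtain ⟨⟨p, hap, hpb, hMap, hmpb⟩, ⟨q, haq, hqb, hmaq, hMqb⟩⟩ :=
      hE a b (hIM a b ⟨hab, haτ, hbτ, hba⟩) hm
    constructor
    · have hpτ : p ∈ τ := hτM p hMap.2.2.1
      by_cases hpInv : Inv τ p b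
      · obtain ⟨hW, -⟩ := ih p b (by omega) hpInv hmpb
        obtain ⟨v, h1, h2, h3, h4⟩ := hW
        exact ⟨v, by omega, h2, h3, h4⟩
      · exact ⟨p, hap, hpb, hpτ, idx_lt_of_not_inv hpb hpτ hbτ hpInv⟩
    · have hqτ : q ∈ τ := hτM q hMqb.2.1
      by_cases hqInv : Inv τ a q
      · obtain ⟨-, hW⟩ := ih a q (by omega) hqInv hmaq
        obtain ⟨v, h1, h2, h3, h4⟩ := hW
        exact ⟨v, h1, by omega, h3, h4⟩
      · exact ⟨q, haq, hqb, hqτ, idx_lt_of_not_inv haq haτ hqτ hqInv⟩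

lemma conv_lemma {m M : List ℕ} (hmN : m.Nodup)
    (hE : ∀ a b, Inv M a b → ¬ Inv m a b →
      ((∃ p, a < p ∧ p < b ∧ Inv M a p ∧ ¬ Inv m p b) ∧
       (∃ q, a < q ∧ q < b ∧ ¬ Inv m a q ∧ Inv M q b))) :
    ∀ k τ, τ.Nodup → τ.Perm m → (∀ z : ℕ, z ∈ M → z ∈ τ) →
      (∀ a b, Inv m a b → Inv τ a b) → (∀ a b, Inv τ a b → Inv M a b) →
      (invF τ).card ≤ k → BaxterEquiv τ m := by
  intro k
  induction k with
  | zero =>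
    intro τ hτn hτm hτM hIm hIM hcard
    by_cases hex : ∃ a b, Inv τ a b ∧ ¬ Inv m a b
    · obtain ⟨a, b, h1, -⟩ := hex
      have : (a, b) ∈ invF τ := mem_invF.2 h1
      have := Finset.card_pos.2 ⟨_, this⟩
      omega
    · push_neg at hex
      have heq : τ = m := eq_of_inv_eq τ m hτn hmN hτm
        (fun a b => ⟨fun h => hex a b h, hIm a b⟩)
      rw [heq]
      exact Relation.EqvGen.refl m
  | succ k ih =>
    intro τ hτn hτm hτM hIm hIM hcard
    by_cases hex : ∃ a b, Inv τ a b ∧ ¬ Inv m a b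
    · obtain ⟨a0, b0, h1, h2⟩ := hex
      obtain ⟨x, y, hxy, hIτxy, hnm, hadj⟩ :=
        exists_descent hτn hτm hIm (τ.idxOf a0) a0 b0 (by omega) h1 h2
      obtain ⟨⟨v1, hxv1, hv1y, hv1τ, hv1idx⟩, ⟨v2, hxv2, hv2y, hv2τ, hv2idx⟩⟩ :=
        W_lemmas hE hτM hIm hIM y x y (by omega) hIτxy hnm
      obtain ⟨τ', hDown, hnInv', hiff'⟩ :=
        down_construct' hτn hxy hxv1 hv1y hxv2 hv2y hIτxy.2.1 hIτxy.2.2.1 hv1τ hv2τ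
          hadj (by omega) (by omega)
      have hτ'n : τ'.Nodup := down_nodup hDown hτn
      have hτ'm : τ'.Perm m := (down_perm hDown).symm.trans hτm
      have hτ'M : ∀ z : ℕ, z ∈ M → z ∈ τ' := fun z hz => (down_perm hDown).mem_iff.1 (hτM z hz)
      have hIm' : ∀ a b, Inv m a b → Inv τ' a b := by
        intro a b h
        have hne : ¬(a = x ∧ b = y) := by
          rintro ⟨rfl, rfl⟩; exact hnm h
        exact (hiff' a b hne).1 (hIm a b h)
      have hIM' : ∀ a b, Inv τ' a b → Inv M a b := by
        intro a b h
        by_cases hne : a = x ∧ b = y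
        · obtain ⟨rfl, rfl⟩ := hne; exact absurd h hnInv'
        · exact hIM a b ((hiff' a b hne).2 h)
      have hcard' : (invF τ').card ≤ k := by
        have := down_card hτn hDown
        omega
      exact Relation.EqvGen.trans _ _ _ (baxterEquiv_of_down hτn hDown)
        (ih τ' hτ'n hτ'm hτ'M hIm' hIM' hcard')
    · push_neg at hex
      have heq : τ = m := eq_of_inv_eq τ m hτn hmN hτm
        (fun a b => ⟨fun h => hex a b h, hIm a b⟩)
      rw [heq]
      exact Relation.EqvGen.refl m

end Final

end BxP


/-- each Baxter equivalence class of permutations of size `n` is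
an interval of the right permutohedron order. -/
theorem baxter_class_is_permutohedron_interval (n : ℕ) (σ : List ℕ)
    (hσ : IsPerm n σ) :
    ∃ m M : List ℕ, IsPerm n m ∧ IsPerm n M ∧ BaxterEquiv σ m ∧ BaxterEquiv σ M ∧
      ∀ τ : List ℕ, IsPerm n τ →
        (BaxterEquiv σ τ ↔ (PermutoLe m τ ∧ PermutoLe τ M)) := by
  classical
  have hrange : (List.range' 1 n).Nodup := List.nodup_range' (s := 1) (n := n)
  have hσn : σ.Nodup := hσ.nodup_iff.2 hrange
  obtain ⟨m, hσm, hmN⟩ := BxP.exists_nf (BxP.invF σ).card σ le_rfl hσn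
  have hmn : m.Nodup := BxP.rtg_downN_nodup hσm hσn
  have hσrn : σ.reverse.Nodup := List.nodup_reverse.2 hσn
  obtain ⟨M', hσM', hM'N⟩ := BxP.exists_nf (BxP.invF σ.reverse).card σ.reverse le_rfl hσrn
  have hM'n : M'.Nodup := BxP.rtg_downN_nodup hσM' hσrn
  set M := M'.reverse with hMdef
  have hMn : M.Nodup := List.nodup_reverse.2 hM'n
  have hEm : BaxterEquiv σ m := BxP.baxterEquiv_of_rtg_stp (BxP.rtg_downN_stp hσm)
  have hEM : BaxterEquiv σ M := by
    have := BxP.rtg_downN_rev_equiv hσM'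
    rwa [List.reverse_reverse] at this
  have hσpm : σ.Perm m := BxP.baxterEquiv_perm hEm
  have hσpM : σ.Perm M := BxP.baxterEquiv_perm hEM
  have key_down : ∀ τ, BaxterEquiv σ τ → Relation.ReflTransGen BxP.DownN τ m := by
    intro τ h
    have hτn : τ.Nodup := (BxP.baxterEquiv_perm h).nodup_iff.1 hσn
    obtain ⟨mτ, h1, h2⟩ := BxP.exists_nf (BxP.invF τ).card τ le_rfl hτn
    have hτm : BaxterEquiv τ m := Relation.EqvGen.trans _ _ _ (Relation.EqvGen.symm _ _ h) hEm
    have hc1 : Relation.ReflTransGen BxP.Stp τ m := BxP.baxterEquiv_rtg_stp hτm hτn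
    have hc2 : Relation.ReflTransGen BxP.Stp τ mτ := BxP.rtg_downN_stp h1
    have heqv : Relation.EqvGen BxP.DownN mτ m :=
      Relation.EqvGen.trans _ _ _
        (Relation.EqvGen.symm _ _ (BxP.eqvgen_downN_of_rtg_stp hc2))
        (BxP.eqvgen_downN_of_rtg_stp hc1)
    have heq : mτ = m :=
      BxP.normal_unique (fun _ _ h => BxP.downN_card h) BxP.downN_lc h2 hmN heqv
    rwa [heq] at h1
  have key_up : ∀ τ, BaxterEquiv σ τ → Relation.ReflTransGen BxP.DownN τ.reverse M' := by
    intro τ h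
    have hτn : τ.Nodup := (BxP.baxterEquiv_perm h).nodup_iff.1 hσn
    have hτrn : τ.reverse.Nodup := List.nodup_reverse.2 hτn
    obtain ⟨Mτ, h1, h2⟩ := BxP.exists_nf (BxP.invF τ.reverse).card τ.reverse le_rfl hτrn
    have hc0 : Relation.ReflTransGen BxP.Stp τ σ :=
      BxP.baxterEquiv_rtg_stp (Relation.EqvGen.symm _ _ h) hτn
    have hc1 : Relation.ReflTransGen BxP.Stp τ.reverse M' :=
      (BxP.rtg_stp_rev hc0).trans (BxP.rtg_downN_stp hσM')
    have hc2 : Relation.ReflTransGen BxP.Stp τ.reverse Mτ := BxP.rtg_downN_stp h1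
    have heqv : Relation.EqvGen BxP.DownN Mτ M' :=
      Relation.EqvGen.trans _ _ _
        (Relation.EqvGen.symm _ _ (BxP.eqvgen_downN_of_rtg_stp hc2))
        (BxP.eqvgen_downN_of_rtg_stp hc1)
    have heq : Mτ = M' :=
      BxP.normal_unique (fun _ _ h => BxP.downN_card h) BxP.downN_lc h2 hM'N heqv
    rwa [heq] at h1
  have lower : ∀ τ, BaxterEquiv σ τ → ∀ a b, BxP.Inv m a b → BxP.Inv τ a b :=
    fun τ h a b hi => BxP.rtg_downN_inv (key_down τ h) a b hi
  have upper : ∀ τ, BaxterEquiv σ τ → ∀ a b, BxP.Inv τ a b → BxP.Inv M a b := by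
    intro τ h a b hi
    have hτn : τ.Nodup := (BxP.baxterEquiv_perm h).nodup_iff.1 hσn
    have hMsub := BxP.rtg_downN_inv (key_up τ h)
    have hτpM' : τ.reverse.Perm M' := BxP.rtg_stp_perm (BxP.rtg_downN_stp (key_up τ h))
    have haM' : a ∈ M' := hτpM'.mem_iff.1 (List.mem_reverse.2 hi.2.1)
    have hbM' : b ∈ M' := hτpM'.mem_iff.1 (List.mem_reverse.2 hi.2.2.1)
    refine (BxP.inv_rev hM'n).2 ⟨hi.1, haM', hbM', ?_⟩
    intro hc
    exact ((BxP.inv_rev hτn).1 (hMsub a b hc)).2.2.2 hi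
  have hchainmM : Relation.ReflTransGen BxP.Stp m M := by
    have heqv : BaxterEquiv m M :=
      Relation.EqvGen.trans _ _ _ (Relation.EqvGen.symm _ _ hEm) hEM
    exact BxP.baxterEquiv_rtg_stp heqv hmn
  have sand1 : ∀ w, Relation.ReflTransGen BxP.Stp m w →
      ∀ a b, BxP.Inv m a b → BxP.Inv w a b :=
    fun w hw => lower w (Relation.EqvGen.trans _ _ _ hEm (BxP.baxterEquiv_of_rtg_stp hw))
  have sand2 : ∀ w, Relation.ReflTransGen BxP.Stp m w →
      ∀ a b, BxP.Inv w a b → BxP.Inv M a b :=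
    fun w hw => upper w (Relation.EqvGen.trans _ _ _ hEm (BxP.baxterEquiv_of_rtg_stp hw))
  have hE : ∀ a b, BxP.Inv M a b → ¬ BxP.Inv m a b →
      ((∃ p, a < p ∧ p < b ∧ BxP.Inv M a p ∧ ¬ BxP.Inv m p b) ∧
       (∃ q, a < q ∧ q < b ∧ ¬ BxP.Inv m a q ∧ BxP.Inv M q b)) := by
    intro a b h1 h2
    exact BxP.ext_walk sand1 sand2 m hchainmM Relation.ReflTransGen.refl h2 h1
  refine ⟨m, M, hσpm.symm.trans hσ, hσpM.symm.trans hσ, hEm, hEM, ?_⟩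
  intro τ hτ
  have hτn : τ.Nodup := hτ.nodup_iff.2 hrange
  constructor
  · intro h
    refine ⟨BxP.rtg_downN_permutoLe (key_down τ h), ?_⟩
    have := BxP.rtg_downN_rev_permutoLe (key_up τ h)
    rwa [List.reverse_reverse] at this
  · rintro ⟨h1, h2⟩
    obtain ⟨hpm, him⟩ := BxP.permutoLe_inv h1 hmn
    obtain ⟨hpM, hiM⟩ := BxP.permutoLe_inv h2 hτn
    have hτMmem : ∀ z : ℕ, z ∈ M → z ∈ τ := fun z hz => hpM.mem_iff.2 hz
    have hconv : BaxterEquiv τ m :=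
      BxP.conv_lemma hmn hE (BxP.invF τ).card τ hτn hpm.symm hτMmem him hiM le_rfl
    exact Relation.EqvGen.trans _ _ _ hEm (Relation.EqvGen.symm _ _ hconv)
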